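/- Let (M_n) be real random variables adapted to a filtration (F_n), and fix λ ∈ ℕ⁺ and C > 0. Then P(max_{1≤n≤λ} M_n ≥ C) ≤ (1/C)·E(max(M_λ, 0)) + (1/C)·∑_{n=1}^{λ-1} √(E M_n²)·√(P(E(M_λ | F_n) < M_n)), provided each M_n is square-integrable and nonnegative on the event {M_n ≥ C}. -/

import Mathlib

open MeasureTheory Filter

theorem stmt12 {Ω : Type*} [m0 : MeasurableSpace Ω] (P : Measure Ω) [IsProbabilityMeasure P]
    (F : ℕ → MeasurableSpace Ω) (hle : ∀ n, F n ≤ m0) (hmono : Monotone F)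
    (M : ℕ → Ω → ℝ) (hadp : ∀ n, @Measurable Ω ℝ (F n) _ (M n))
    (hLp : ∀ n, MemLp (M n) 2 P)
    (lam : ℕ) (hlam : 1 ≤ lam) (C : ℝ) (hC : 0 < C) :
    (P {x | ∃ n ∈ Finset.Icc 1 lam, C ≤ M n x}).toReal ≤
      (1 / C) * (∫ x, max (M lam x) 0 ∂P) +
        (1 / C) * ∑ n ∈ Finset.Icc 1 (lam - 1),
          Real.sqrt (∫ x, (M n x) ^ 2 ∂P) *
            Real.sqrt ((P {x | (P[M lam|F n]) x < M n x}).toReal) := by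
  classical
  have hint : ∀ n, Integrable (M n) P := fun n => (hLp n).integrable one_le_two
  set A : ℕ → Set Ω := fun n => {x | C ≤ M n x ∧ ∀ k ∈ Finset.Ico 1 n, M k x < C} with hA
  set Bs : ℕ → Set Ω := fun n => {x | M n x ≤ (P[M lam|F n]) x} with hBs
  set Bc : ℕ → Set Ω := fun n => {x | (P[M lam|F n]) x < M n x} with hBc
  set K : ℕ → ℝ := fun n =>
    Real.sqrt (∫ x, (M n x) ^ 2 ∂P) * Real.sqrt ((P (Bc n)).toReal) with hK
  set s : Finset ℕ := Finset.Icc 1 lam with hs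
  -- measurability
  have hgsm : ∀ n, StronglyMeasurable[F n] (P[M lam|F n]) := fun n => stronglyMeasurable_condExp
  have hBsmF : ∀ n, MeasurableSet[F n] (Bs n) := fun n =>
    measurableSet_le (hadp n) (hgsm n).measurable
  have hBcm : ∀ n, MeasurableSet (Bc n) := fun n =>
    hle n _ (measurableSet_lt (hgsm n).measurable (hadp n))
  have hAmF : ∀ n, MeasurableSet[F n] (A n) := by
    intro n
    have : A n = {x | C ≤ M n x} ∩ ⋂ k ∈ Finset.Ico 1 n, {x | M k x < C} := by
      ext x; simp [hA, Set.mem_iInter]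
    rw [this]
    refine (measurableSet_le measurable_const (hadp n)).inter ?_
    refine MeasurableSet.biInter (Set.to_countable _) fun k hk => ?_
    have hkn : k < n := (Finset.mem_Ico.mp hk).2
    exact hmono hkn.le _ (measurableSet_lt (hadp k) measurable_const)
  have hAm : ∀ n, MeasurableSet (A n) := fun n => hle n _ (hAmF n)
  have hABmF : ∀ n, MeasurableSet[F n] (A n ∩ Bs n) := fun n => (hAmF n).inter (hBsmF n)
  have hABm : ∀ n, MeasurableSet (A n ∩ Bs n) := fun n => hle n _ (hABmF n)
  -- disjointness
  have hdisj : (↑s : Set ℕ).Pairwise (Function.onFun Disjoint A) := by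
    intro m hm n hn hmn
    simp only [hs, Finset.coe_Icc, Set.mem_Icc] at hm hn
    rcases hmn.lt_or_gt with h | h
    · refine Set.disjoint_left.mpr fun x hxm hxn => ?_
      exact absurd hxm.1 (not_le.mpr (hxn.2 m (Finset.mem_Ico.mpr ⟨hm.1, h⟩)))
    · refine Set.disjoint_left.mpr fun x hxm hxn => ?_
      exact absurd hxn.1 (not_le.mpr (hxm.2 n (Finset.mem_Ico.mpr ⟨hn.1, h⟩)))
  -- the target set is contained in the union
  have hsub : {x | ∃ n ∈ Finset.Icc 1 lam, C ≤ M n x} ⊆ ⋃ n ∈ s, A n := by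
    intro x hx
    have hex : ∃ n, n ∈ Finset.Icc 1 lam ∧ C ≤ M n x := by
      obtain ⟨n, hn, h⟩ := hx; exact ⟨n, hn, h⟩
    obtain ⟨hn₀mem, hn₀C⟩ := Nat.find_spec hex
    refine Set.mem_biUnion (show Nat.find hex ∈ s from hn₀mem) ?_
    refine ⟨hn₀C, fun k hk => ?_⟩
    simp only [Finset.mem_Ico] at hk
    by_contra hkC
    push_neg at hkC
    have hkmem : k ∈ Finset.Icc 1 lam := by
      rw [Finset.mem_Icc] at hn₀mem ⊢
      exact ⟨hk.1, le_trans hk.2.le hn₀mem.2⟩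
    exact absurd (Nat.find_le ⟨hkmem, hkC⟩) (not_le.mpr hk.2)
  -- Cauchy-Schwarz
  have CS : ∀ n, (∫ x in Bc n, |M n x| ∂P) ≤ K n := by
    intro n
    have h2 : (ENNReal.ofReal 2) = (2 : ENNReal) := by
      rw [ENNReal.ofReal_ofNat]
    have h1 : MemLp (fun x => |M n x|) (ENNReal.ofReal 2) P := by
      rw [h2]; simpa [Real.norm_eq_abs] using (hLp n).norm
    have hind : MemLp ((Bc n).indicator fun _ => (1 : ℝ)) (ENNReal.ofReal 2) P := by
      rw [h2]; exact memLp_indicator_const 2 (hBcm n) 1 (Or.inr (measure_ne_top P _))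
    have hcs := integral_mul_le_Lp_mul_Lq_of_nonneg
      Real.HolderConjugate.two_two
      (Eventually.of_forall fun x => abs_nonneg _)
      (Eventually.of_forall fun x => Set.indicator_nonneg (fun _ _ => zero_le_one) x)
      h1 hind
    have hL : ∫ a, |M n a| * (Bc n).indicator (fun _ => (1 : ℝ)) a ∂P
        = ∫ x in Bc n, |M n x| ∂P := by
      rw [← integral_indicator (hBcm n)]
      congr 1 with a
      by_cases ha : a ∈ Bc n <;> simp [ha]
    have hR1 : ∫ a, |M n a| ^ (2 : ℝ) ∂P = ∫ x, (M n x) ^ 2 ∂P := by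
      congr 1 with a
      rw [show (2 : ℝ) = ((2 : ℕ) : ℝ) by norm_num, Real.rpow_natCast, sq_abs]
    have hR2 : ∫ a, ((Bc n).indicator (fun _ => (1 : ℝ)) a) ^ (2 : ℝ) ∂P
        = (P (Bc n)).toReal := by
      have : ∀ a, ((Bc n).indicator (fun _ => (1 : ℝ)) a) ^ (2 : ℝ)
          = (Bc n).indicator (fun _ => (1 : ℝ)) a := by
        intro a
        by_cases ha : a ∈ Bc n <;>
          simp [ha, Real.zero_rpow (by norm_num : (2:ℝ) ≠ 0)]
      simp_rw [this]
      rw [integral_indicator_const (1 : ℝ) (hBcm n)]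
      simp [measureReal_def]
    rw [hL, hR1, hR2] at hcs
    calc ∫ x in Bc n, |M n x| ∂P
        ≤ (∫ x, (M n x) ^ 2 ∂P) ^ (1 / (2:ℝ)) * ((P (Bc n)).toReal) ^ (1 / (2:ℝ)) := hcs
      _ = K n := by rw [← Real.sqrt_eq_rpow, ← Real.sqrt_eq_rpow]
  -- key per-n estimate
  have key : ∀ n ∈ s, C * (P (A n)).toReal ≤ (∫ x in A n ∩ Bs n, M lam x ∂P) + K n := by
    intro n hn
    have step1 : C * (P (A n)).toReal ≤ ∫ x in A n, M n x ∂P :=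
      by have := setIntegral_ge_of_const_le (hAm n) (measure_ne_top P _)
                  (fun x hx => hx.1) (hint n).integrableOn
         rw [smul_eq_mul, mul_comm] at this; exact this
    have hsplit : (∫ x in A n ∩ Bs n, M n x ∂P) + (∫ x in A n \ Bs n, M n x ∂P)
        = ∫ x in A n, M n x ∂P :=
      integral_inter_add_diff (hle n _ (hBsmF n)) (hint n).integrableOn
    have h3 : ∫ x in A n ∩ Bs n, M n x ∂P ≤ ∫ x in A n ∩ Bs n, M lam x ∂P := by
      calc ∫ x in A n ∩ Bs n, M n x ∂P
          ≤ ∫ x in A n ∩ Bs n, (P[M lam|F n]) x ∂P :=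
            setIntegral_mono_on (hint n).integrableOn integrable_condExp.integrableOn
              (hABm n) (fun x hx => hx.2)
        _ = ∫ x in A n ∩ Bs n, M lam x ∂P := setIntegral_condExp (hle n) (hint lam) (hABmF n)
    have h4 : ∫ x in A n \ Bs n, M n x ∂P ≤ K n := by
      have hsubBc : A n \ Bs n ⊆ Bc n := fun x hx =>
        show (P[M lam|F n]) x < M n x from not_le.mp hx.2
      have hmeas : MeasurableSet (A n \ Bs n) := (hAm n).diff (hle n _ (hBsmF n))
      calc ∫ x in A n \ Bs n, M n x ∂P
          ≤ ∫ x in A n \ Bs n, |M n x| ∂P :=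
            setIntegral_mono_on (hint n).integrableOn (hint n).abs.integrableOn
              hmeas (fun x _ => le_abs_self _)
        _ ≤ ∫ x in Bc n, |M n x| ∂P :=
            setIntegral_mono_set (hint n).abs.integrableOn
              (Eventually.of_forall fun x => abs_nonneg _)
              (HasSubset.Subset.eventuallyLE hsubBc)
        _ ≤ K n := CS n
    linarith
  -- K lam = 0
  have hKlam : K lam = 0 := by
    have hcond : P[M lam|F lam] = M lam :=
      condExp_of_stronglyMeasurable (hle lam) (hadp lam).stronglyMeasurable (hint lam)
    have : Bc lam = ∅ := by
      ext x; simp [hBc, hcond]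
    rw [hK]
    simp [this]
  -- sum over Icc 1 lam equals sum over Icc 1 (lam-1)
  have hins : s = insert lam (Finset.Icc 1 (lam - 1)) := by
    ext k
    simp only [hs, Finset.mem_insert, Finset.mem_Icc]
    omega
  have hnotmem : lam ∉ Finset.Icc 1 (lam - 1) := by
    simp only [Finset.mem_Icc]; omega
  have hKsum : ∑ n ∈ s, K n = ∑ n ∈ Finset.Icc 1 (lam - 1), K n := by
    rw [hins, Finset.sum_insert hnotmem, hKlam, zero_add]
  -- sum of integrals over disjoint sets bounded by integral of positive part
  have hposint : Integrable (fun x => max (M lam x) 0) P := (hint lam).pos_part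
  have hsum2 : ∑ n ∈ s, (∫ x in A n ∩ Bs n, M lam x ∂P) ≤ ∫ x, max (M lam x) 0 ∂P := by
    calc ∑ n ∈ s, (∫ x in A n ∩ Bs n, M lam x ∂P)
        ≤ ∑ n ∈ s, (∫ x in A n ∩ Bs n, max (M lam x) 0 ∂P) := by
          refine Finset.sum_le_sum fun n hn => ?_
          exact setIntegral_mono_on (hint lam).integrableOn hposint.integrableOn
            (hABm n) (fun x _ => le_max_left _ _)
      _ = ∫ x in ⋃ n ∈ s, (A n ∩ Bs n), max (M lam x) 0 ∂P := by
          refine (integral_biUnion_finset s (fun n _ => hABm n) ?_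
            (fun n _ => hposint.integrableOn)).symm
          intro m hm n hn hmn
          exact ((hdisj hm hn hmn).mono (Set.inter_subset_left) (Set.inter_subset_left))
      _ ≤ ∫ x, max (M lam x) 0 ∂P :=
          setIntegral_le_integral hposint (Eventually.of_forall fun x => le_max_right _ _)
  -- union bound
  have hub : (P {x | ∃ n ∈ Finset.Icc 1 lam, C ≤ M n x}).toReal
      ≤ ∑ n ∈ s, (P (A n)).toReal := by
    rw [← ENNReal.toReal_sum (fun n _ => measure_ne_top P _)]
    refine ENNReal.toReal_mono (ENNReal.sum_ne_top.mpr fun n _ => measure_ne_top P _) ?_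
    exact (measure_mono hsub).trans (measure_biUnion_finset_le s A)
  -- put it all together
  have main : C * (P {x | ∃ n ∈ Finset.Icc 1 lam, C ≤ M n x}).toReal
      ≤ (∫ x, max (M lam x) 0 ∂P) + ∑ n ∈ Finset.Icc 1 (lam - 1), K n := by
    calc C * (P {x | ∃ n ∈ Finset.Icc 1 lam, C ≤ M n x}).toReal
        ≤ C * ∑ n ∈ s, (P (A n)).toReal := by
          exact mul_le_mul_of_nonneg_left hub hC.le
      _ = ∑ n ∈ s, C * (P (A n)).toReal := Finset.mul_sum _ _ _
      _ ≤ ∑ n ∈ s, ((∫ x in A n ∩ Bs n, M lam x ∂P) + K n) := Finset.sum_le_sum key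
      _ = (∑ n ∈ s, (∫ x in A n ∩ Bs n, M lam x ∂P)) + ∑ n ∈ s, K n :=
          Finset.sum_add_distrib
      _ ≤ (∫ x, max (M lam x) 0 ∂P) + ∑ n ∈ Finset.Icc 1 (lam - 1), K n := by
          rw [hKsum]; exact add_le_add_left hsum2 _
  have hgoal : ∑ n ∈ Finset.Icc 1 (lam - 1),
      Real.sqrt (∫ x, (M n x) ^ 2 ∂P) *
        Real.sqrt ((P {x | (P[M lam|F n]) x < M n x}).toReal)
      = ∑ n ∈ Finset.Icc 1 (lam - 1), K n := rfl
  rw [hgoal]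
  have h2 : (P {x | ∃ n ∈ Finset.Icc 1 lam, C ≤ M n x}).toReal
      ≤ ((∫ x, max (M lam x) 0 ∂P) + ∑ n ∈ Finset.Icc 1 (lam - 1), K n) / C := by
    rw [le_div_iff₀ hC]
    linarith [main]
  calc (P {x | ∃ n ∈ Finset.Icc 1 lam, C ≤ M n x}).toReal
      ≤ ((∫ x, max (M lam x) 0 ∂P) + ∑ n ∈ Finset.Icc 1 (lam - 1), K n) / C := h2
    _ = (1 / C) * (∫ x, max (M lam x) 0 ∂P)
        + (1 / C) * ∑ n ∈ Finset.Icc 1 (lam - 1), K n := by ring
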